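/- Assume $k \leq n/2$. The square matrix $E_k$ whose rows are the vectors $\eta_{j,k}(J)$ for $0 \leq j \leq k$ and $J$ ranging over $j$-subsets of rank $j$ is unimodular, i.e., has determinant $\pm 1$. -/

import Mathlib

/-- The list of elements of a subset of `Fin n`, in increasing order, renumbered as
elements of `{1, …, n}`. -/
def sortedVals {n : ℕ} (s : Finset (Fin n)) : List ℕ :=
  (s.sort (· ≤ ·)).map (fun i => (i : ℕ) + 1)

/-- A `j`-subset `{i₁ < i₂ < ⋯ < i_j}` of `{1, …, n}` has rank `j` iff `iₗ ≥ 2ℓ` for all `ℓ`. -/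
def IsFullRank {n : ℕ} (s : Finset (Fin n)) : Prop :=
  ∀ j < s.card, 2 * (j + 1) ≤ (sortedVals s).getD j 0

instance {n : ℕ} (s : Finset (Fin n)) : Decidable (IsFullRank s) := by
  unfold IsFullRank; infer_instance

/-- The canonical basis matrix `E_k`: rows indexed by the `j`-subsets `J` of rank `j`
(for all `0 ≤ j ≤ k`), columns indexed by `k`-subsets `K`; the row of `J` is the vector
`η_{j,k}(J)`, i.e. has entry `1` at `K` iff `J ⊆ K`. -/
def bierMatrix (n k : ℕ) :
    Matrix {J : Finset (Fin n) // J.card ≤ k ∧ IsFullRank J}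
      {K : Finset (Fin n) // K.card = k} ℤ :=
  fun J K => if J.1 ⊆ K.1 then 1 else 0

namespace BierAux

open Finset

noncomputable section
open scoped Classical

/-! ### The counting form of the full-rank condition, over `ℕ` ground sets. -/

/-- Full rank, formulated by counting: at most `⌊v/2⌋` elements below `v` (0-based values). -/
def FR (J : Finset ℕ) : Prop := ∀ v : ℕ, 2 * (J.filter (· < v)).card ≤ v

lemma FR_empty : FR ∅ := by intro v; simp

lemma FR.subset {J J' : Finset ℕ} (h : FR J) (hs : J' ⊆ J) : FR J' := fun v =>
  le_trans (Nat.mul_le_mul_left 2 (card_le_card (filter_subset_filter _ hs))) (h v)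

lemma FR_insert {J : Finset ℕ} {m : ℕ} (h : FR J) (hm : m ∉ J)
    (hc : 2 * (J.card + 1) ≤ m + 1) : FR (insert m J) := by
  intro v
  rcases le_or_gt v m with hv | hv
  · rw [Finset.filter_insert, if_neg (by omega : ¬ m < v)]
    exact h v
  · have h1 : ((insert m J).filter (· < v)).card ≤ J.card + 1 := by
      refine le_trans (card_filter_le _ _) ?_
      rw [card_insert_of_notMem hm]
    omega

lemma FR.twice_card_le {J : Finset ℕ} {m : ℕ} (h : FR J) (hs : J ⊆ range m) :
    2 * J.card ≤ m := by
  have h2 : J.filter (· < m) = J := by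
    apply filter_true_of_mem
    intro x hx
    exact mem_range.1 (hs hx)
  have := h m
  rwa [h2] at this

/-! ### Rows, unit vectors and the span of the full-rank rows. -/

/-- The abstract "η" row vector: indicator of `{K ⊆ range m : |K| = k, J ⊆ K}`. -/
def rowN (m k : ℕ) (J : Finset ℕ) : Finset ℕ → ℤ :=
  fun K => if K ⊆ range m ∧ K.card = k ∧ J ⊆ K then 1 else 0

/-- Disjointness indicator vector. -/
def disN (m k : ℕ) (J : Finset ℕ) : Finset ℕ → ℤ :=
  fun K => if K ⊆ range m ∧ K.card = k ∧ Disjoint J K then 1 else 0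

/-- Unit vector. -/
def eV (K : Finset ℕ) : Finset ℕ → ℤ := fun K' => if K' = K then 1 else 0

lemma rowN_apply (m k : ℕ) (J K : Finset ℕ) :
    rowN m k J K = if K ⊆ range m ∧ K.card = k ∧ J ⊆ K then 1 else 0 := rfl

lemma disN_apply (m k : ℕ) (J K : Finset ℕ) :
    disN m k J K = if K ⊆ range m ∧ K.card = k ∧ Disjoint J K then 1 else 0 := rfl

/-- The span of the rows of full-rank sets. -/
def SpanRows (m k : ℕ) : Submodule ℤ (Finset ℕ → ℤ) :=
  Submodule.span ℤ {f : Finset ℕ → ℤ | ∃ J : Finset ℕ, J ⊆ range m ∧ FR J ∧ f = rowN m k J}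

lemma rowN_mem {m k : ℕ} {J : Finset ℕ} (hs : J ⊆ range m) (hf : FR J) :
    rowN m k J ∈ SpanRows m k :=
  Submodule.subset_span ⟨J, hs, hf, rfl⟩

lemma rowN_zero {m k : ℕ} {J : Finset ℕ} (hk : k < J.card) : rowN m k J = 0 := by
  funext K
  rw [rowN, if_neg, Pi.zero_apply]
  rintro ⟨-, h2, h3⟩
  have := card_le_card h3
  omega

/-- Lifting along insertion of a new top element. -/
def liftT (a : ℕ) : (Finset ℕ → ℤ) →ₗ[ℤ] (Finset ℕ → ℤ) where
  toFun f := fun K => if a ∈ K then f (K.erase a) else 0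
  map_add' f g := by funext K; by_cases h : a ∈ K <;> simp [h]
  map_smul' c f := by funext K; by_cases h : a ∈ K <;> simp [h]

lemma liftT_apply (a : ℕ) (f : Finset ℕ → ℤ) (K : Finset ℕ) :
    liftT a f K = if a ∈ K then f (K.erase a) else 0 := rfl

/-! ### Small subset/range helper lemmas. -/

lemma erase_subset_range {m : ℕ} {K : Finset ℕ} (h : K ⊆ range (m + 1)) :
    K.erase m ⊆ range m := by
  intro x hx
  have h1 := mem_of_mem_erase hx
  have h2 := ne_of_mem_erase hx
  have := mem_range.1 (h h1)
  exact mem_range.2 (by omega)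

lemma subset_range_succ {m : ℕ} {K : Finset ℕ} (h : K.erase m ⊆ range m) :
    K ⊆ range (m + 1) := by
  intro x hx
  rcases eq_or_ne x m with rfl | hne
  · exact mem_range.2 (by omega)
  · have := mem_range.1 (h (mem_erase.2 ⟨hne, hx⟩))
    exact mem_range.2 (by omega)

lemma subset_range_succ_iff {m : ℕ} {K : Finset ℕ} (hm : m ∉ K) :
    K ⊆ range (m + 1) ↔ K ⊆ range m := by
  constructor
  · intro h x hx
    have := mem_range.1 (h hx)
    have hxm : x ≠ m := fun he => hm (he ▸ hx)
    exact mem_range.2 (by omega)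
  · intro h x hx
    have := mem_range.1 (h hx)
    exact mem_range.2 (by omega)

lemma notmem_of_subset_range {m : ℕ} {J : Finset ℕ} (h : J ⊆ range m) : m ∉ J :=
  fun hm => by simpa using h hm

/-! ### The three structural identities for rows under removal of the top element. -/

lemma row_split {m k : ℕ} {J : Finset ℕ} (hJ : J ⊆ range m) :
    rowN (m + 1) (k + 1) J = rowN m (k + 1) J + liftT m (rowN m k J) := by
  have hmJ : m ∉ J := notmem_of_subset_range hJ
  funext K
  rw [Pi.add_apply, liftT_apply]
  by_cases hm : m ∈ K
  · have h0 : ¬ K ⊆ range m := fun h => by simpa using h hm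
    have hKpos : 1 ≤ K.card := card_pos.2 ⟨m, hm⟩
    have he : (K ⊆ range (m + 1) ∧ K.card = k + 1 ∧ J ⊆ K) ↔
        (K.erase m ⊆ range m ∧ (K.erase m).card = k ∧ J ⊆ K.erase m) := by
      constructor
      · rintro ⟨h1, h2, h3⟩
        refine ⟨erase_subset_range h1, ?_, ?_⟩
        · rw [card_erase_of_mem hm, h2]
          omega
        · intro x hx
          exact mem_erase.2 ⟨fun hh => hmJ (hh ▸ hx), h3 hx⟩
      · rintro ⟨h1, h2, h3⟩
        refine ⟨subset_range_succ h1, ?_, h3.trans (erase_subset _ _)⟩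
        rw [card_erase_of_mem hm] at h2
        omega
    have hL : rowN (m + 1) (k + 1) J K
        = if K.erase m ⊆ range m ∧ (K.erase m).card = k ∧ J ⊆ K.erase m then 1 else 0 := by
      rw [rowN, if_congr he rfl rfl]
    have hA : rowN m (k + 1) J K = 0 := by
      rw [rowN, if_neg (fun hcon => h0 hcon.1)]
    rw [hL, hA, if_pos hm, zero_add]
    rfl
  · have he : (K ⊆ range (m + 1) ∧ K.card = k + 1 ∧ J ⊆ K) ↔
        (K ⊆ range m ∧ K.card = k + 1 ∧ J ⊆ K) := by
      rw [subset_range_succ_iff hm]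
    have hL : rowN (m + 1) (k + 1) J K
        = if K ⊆ range m ∧ K.card = k + 1 ∧ J ⊆ K then 1 else 0 := by
      rw [rowN, if_congr he rfl rfl]
    rw [hL, if_neg hm, add_zero]
    rfl

lemma row_insert_top {m k : ℕ} {J : Finset ℕ} (hJ : J ⊆ range m) :
    rowN (m + 1) (k + 1) (insert m J) = liftT m (rowN m k J) := by
  have hmJ : m ∉ J := notmem_of_subset_range hJ
  funext K
  rw [liftT_apply]
  by_cases hm : m ∈ K
  · have hKpos : 1 ≤ K.card := card_pos.2 ⟨m, hm⟩
    rw [if_pos hm]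
    have he : (K ⊆ range (m + 1) ∧ K.card = k + 1 ∧ insert m J ⊆ K) ↔
        (K.erase m ⊆ range m ∧ (K.erase m).card = k ∧ J ⊆ K.erase m) := by
      constructor
      · rintro ⟨h1, h2, h3⟩
        refine ⟨erase_subset_range h1, by rw [card_erase_of_mem hm, h2]; omega, ?_⟩
        intro x hx
        exact mem_erase.2 ⟨fun hh => hmJ (hh ▸ hx), h3 (mem_insert_of_mem hx)⟩
      · rintro ⟨h1, h2, h3⟩
        refine ⟨subset_range_succ h1, ?_, ?_⟩
        · rw [card_erase_of_mem hm] at h2; omega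
        · intro x hx
          rcases mem_insert.1 hx with rfl | hx'
          · exact hm
          · exact mem_of_mem_erase (h3 hx')
    show (if K ⊆ range (m + 1) ∧ K.card = k + 1 ∧ insert m J ⊆ K then (1 : ℤ) else 0) = _
    rw [if_congr he rfl rfl]
    rfl
  · rw [rowN, if_neg hm, if_neg]
    rintro ⟨-, -, h3⟩
    exact hm (h3 (mem_insert_self m J))

lemma liftT_e {m : ℕ} {K : Finset ℕ} (hm : m ∉ K) :
    liftT m (eV K) = eV (insert m K) := by
  funext K'
  rw [liftT_apply, eV, eV]
  by_cases hm' : m ∈ K'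
  · rw [if_pos hm']
    by_cases he : K'.erase m = K
    · rw [if_pos he, if_pos (by rw [← he, insert_erase hm'])]
    · rw [if_neg he, if_neg (fun hc => he (by rw [hc, erase_insert hm]))]
  · rw [if_neg hm', if_neg (fun hc => hm' (by rw [hc]; exact mem_insert_self m K))]

/-! ### The inclusion–exclusion (pigeonhole) identity. -/

lemma sum_row_eq_dis (m k : ℕ) (J : Finset ℕ) :
    ∑ U ∈ J.powerset, ((-1 : ℤ) ^ U.card) • rowN m k U = disN m k J := by
  funext K
  rw [Finset.sum_apply]
  have hpt : ∀ U ∈ J.powerset, (((-1 : ℤ) ^ U.card) • rowN m k U) K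
      = ((-1 : ℤ) ^ U.card) * (if K ⊆ range m ∧ K.card = k ∧ U ⊆ K then 1 else 0) := by
    intro U _
    rw [Pi.smul_apply, smul_eq_mul, rowN_apply]
  rw [Finset.sum_congr rfl hpt, disN_apply]
  by_cases hbase : K ⊆ range m ∧ K.card = k
  · have hterm : ∀ U ∈ J.powerset,
        ((-1 : ℤ) ^ U.card) * (if K ⊆ range m ∧ K.card = k ∧ U ⊆ K then 1 else 0)
          = if U ⊆ K then ((-1 : ℤ) ^ U.card) else 0 := by
      intro U _
      by_cases hUK : U ⊆ K
      · rw [if_pos ⟨hbase.1, hbase.2, hUK⟩, if_pos hUK, mul_one]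
      · rw [if_neg (fun h => hUK h.2.2), if_neg hUK, mul_zero]
    rw [Finset.sum_congr rfl hterm]
    have hzero : ∀ U ∈ J.powerset, U ∉ (J ∩ K).powerset →
        (if U ⊆ K then ((-1 : ℤ) ^ U.card) else 0) = 0 := by
      intro U hU hnU
      apply if_neg
      intro hUK
      exact hnU (mem_powerset.2 (subset_inter (mem_powerset.1 hU) hUK))
    rw [← Finset.sum_subset (powerset_mono.2 inter_subset_left) hzero]
    have hall : ∀ U ∈ (J ∩ K).powerset,
        (if U ⊆ K then ((-1 : ℤ) ^ U.card) else 0) = (-1 : ℤ) ^ U.card := fun U hU =>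
      if_pos ((mem_powerset.1 hU).trans inter_subset_right)
    rw [Finset.sum_congr rfl hall, Finset.sum_powerset_neg_one_pow_card]
    by_cases hd : J ∩ K = ∅
    · rw [if_pos hd, if_pos ⟨hbase.1, hbase.2, disjoint_iff_inter_eq_empty.2 hd⟩]
    · rw [if_neg hd, if_neg (fun h => hd (disjoint_iff_inter_eq_empty.1 h.2.2))]
  · rw [if_neg (fun h => hbase ⟨h.1, h.2.1⟩)]
    apply Finset.sum_eq_zero
    intro U _
    rw [if_neg (fun h => hbase ⟨h.1, h.2.1⟩), mul_zero]

lemma disN_eq_zero {m k : ℕ} {J : Finset ℕ} (h : m < J.card + k) (hJ : J ⊆ range m) :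
    disN m k J = 0 := by
  funext K
  rw [disN, if_neg, Pi.zero_apply]
  rintro ⟨h1, h2, h3⟩
  have hJm : J.card ≤ m := by simpa using card_le_card hJ
  have hK : K ⊆ range m \ J := subset_sdiff.2 ⟨h1, h3.symm⟩
  have := card_le_card hK
  rw [card_sdiff_of_subset hJ, card_range] at this
  omega

lemma disN_eq_e {m k : ℕ} {J : Finset ℕ} (h : J.card + k = m) (hJ : J ⊆ range m) :
    disN m k J = eV (range m \ J) := by
  funext K
  rw [disN, eV]
  by_cases hK : K = range m \ J
  · subst hK
    rw [if_pos, if_pos rfl]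
    have hJm : J.card ≤ m := by simpa using card_le_card hJ
    refine ⟨sdiff_subset, ?_, ?_⟩
    · rw [card_sdiff_of_subset hJ, card_range]; omega
    · exact Finset.disjoint_left.2 fun a ha hmem => (mem_sdiff.1 hmem).2 ha
  · rw [if_neg hK]
    apply if_neg
    rintro ⟨h1, h2, h3⟩
    apply hK
    have hJm : J.card ≤ m := by simpa using card_le_card hJ
    apply Finset.eq_of_subset_of_card_le (subset_sdiff.2 ⟨h1, h3.symm⟩)
    rw [card_sdiff_of_subset hJ, card_range]
    omega

/-! ### The main spanning theorem. -/

lemma eV_empty_eq_row (m : ℕ) : eV (∅ : Finset ℕ) = rowN m 0 ∅ := by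
  funext K'
  rw [eV, rowN]
  by_cases h : K' = (∅ : Finset ℕ)
  · subst h
    rw [if_pos rfl, if_pos ⟨empty_subset _, card_empty, Finset.Subset.refl _⟩]
  · rw [if_neg h, if_neg (fun hc => h (card_eq_zero.1 hc.2.1))]

theorem span_eN : ∀ (m k : ℕ) (K : Finset ℕ), K ⊆ range m → K.card = k →
    eV K ∈ SpanRows m k := by
  intro m
  induction m with
  | zero =>
    intro k K hK hc
    have hKe : K = ∅ := subset_empty.1 (by simpa using hK)
    subst hKe
    obtain rfl : k = 0 := by simpa using hc.symm
    rw [eV_empty_eq_row 0]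
    exact rowN_mem (empty_subset _) FR_empty
  | succ m IH =>
    -- Step A1: insertable case
    have stepA1 : ∀ (k' : ℕ) (J : Finset ℕ), J ⊆ range m → FR J → 2 * (J.card + 1) ≤ m + 1 →
        liftT m (rowN m k' J) ∈ SpanRows (m + 1) (k' + 1) := by
      intro k' J hJ hFR hc
      rw [← row_insert_top hJ]
      apply rowN_mem
      · intro x hx
        rcases mem_insert.1 hx with rfl | hx'
        · exact mem_range.2 (by omega)
        · have := mem_range.1 (hJ hx')
          exact mem_range.2 (by omega)
      · exact FR_insert hFR (notmem_of_subset_range hJ) hc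
    -- Step A: all cases
    have stepA : ∀ (k' : ℕ) (J : Finset ℕ), J ⊆ range m → FR J →
        liftT m (rowN m k' J) ∈ SpanRows (m + 1) (k' + 1) := by
      intro k' J hJ hFR
      by_cases hc : 2 * (J.card + 1) ≤ m + 1
      · exact stepA1 k' J hJ hFR hc
      · by_cases hk' : k' < J.card
        · rw [rowN_zero hk', LinearMap.map_zero]
          exact Submodule.zero_mem _
        · have h2 : 2 * J.card ≤ m := hFR.twice_card_le hJ
          have hm2 : m = 2 * J.card := by omega
          have hph := sum_row_eq_dis m k' J
          have hsplit : ((-1 : ℤ) ^ J.card) • rowN m k' J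
              = disN m k' J - ∑ U ∈ J.powerset.erase J, ((-1 : ℤ) ^ U.card) • rowN m k' U := by
            have h0 := Finset.add_sum_erase J.powerset
              (fun U => ((-1 : ℤ) ^ U.card) • rowN m k' U) (mem_powerset_self J)
            rw [hph] at h0
            exact eq_sub_of_add_eq h0
          have hone : ((-1 : ℤ) ^ J.card) * ((-1 : ℤ) ^ J.card) = 1 := by
            rw [← pow_add, ← two_mul, pow_mul]
            norm_num
          have hrow : rowN m k' J = ((-1 : ℤ) ^ J.card) •
              (disN m k' J - ∑ U ∈ J.powerset.erase J, ((-1 : ℤ) ^ U.card) • rowN m k' U) := by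
            rw [← hsplit, smul_smul, hone, one_smul]
          have hUmem : ∀ U ∈ J.powerset.erase J,
              liftT m (rowN m k' U) ∈ SpanRows (m + 1) (k' + 1) := by
            intro U hU
            have hUJ : U ⊆ J := mem_powerset.1 (mem_of_mem_erase hU)
            have hUne : U ≠ J := ne_of_mem_erase hU
            have hcard : U.card < J.card :=
              card_lt_card (Finset.ssubset_iff_subset_ne.2 ⟨hUJ, hUne⟩)
            exact stepA1 k' U (hUJ.trans hJ) (hFR.subset hUJ) (by omega)
          have hdis : liftT m (disN m k' J) ∈ SpanRows (m + 1) (k' + 1) := by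
            rcases eq_or_lt_of_le (not_lt.1 hk') with heq | hgt
            · -- k' = J.card
              have hJr : J ⊆ range (m + 1) := by
                intro x hx
                have := mem_range.1 (hJ hx)
                exact mem_range.2 (by omega)
              have hde : disN m k' J = eV (range m \ J) := disN_eq_e (by omega) hJ
              have hins : insert m (range m \ J) = range (m + 1) \ J := by
                ext x
                simp only [mem_insert, mem_sdiff, mem_range]
                constructor
                · rintro (rfl | ⟨hx1, hx2⟩)
                  · exact ⟨by omega, notmem_of_subset_range hJ⟩
                  · exact ⟨by omega, hx2⟩
                · rintro ⟨hx1, hx2⟩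
                  rcases eq_or_ne x m with rfl | hne
                  · exact Or.inl rfl
                  · exact Or.inr ⟨by omega, hx2⟩
              have heq2 : eV (range (m + 1) \ J) = disN (m + 1) (k' + 1) J :=
                (disN_eq_e (by omega) hJr).symm
              have h5 : liftT m (disN m k' J) = disN (m + 1) (k' + 1) J := by
                rw [hde, liftT_e (show m ∉ range m \ J by simp), hins, heq2]
              rw [h5, ← sum_row_eq_dis (m + 1) (k' + 1) J]
              apply Submodule.sum_mem
              intro U hU
              apply Submodule.smul_mem
              exact rowN_mem ((mem_powerset.1 hU).trans hJr) (hFR.subset (mem_powerset.1 hU))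
            · -- J.card < k'
              rw [disN_eq_zero (by omega) hJ, LinearMap.map_zero]
              exact Submodule.zero_mem _
          rw [hrow, map_smul, map_sub, map_sum]
          refine Submodule.smul_mem _ _ (Submodule.sub_mem _ hdis ?_)
          apply Submodule.sum_mem
          intro U hU
          rw [map_smul]
          exact Submodule.smul_mem _ _ (hUmem U hU)
    -- main case analysis
    intro k K hK hc
    cases k with
    | zero =>
      have hKe : K = ∅ := card_eq_zero.1 hc
      subst hKe
      rw [eV_empty_eq_row (m + 1)]
      exact rowN_mem (empty_subset _) FR_empty
    | succ k' =>
      by_cases hm : m ∈ K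
      · have h1 : eV K = liftT m (eV (K.erase m)) := by
          rw [liftT_e (notMem_erase m K), insert_erase hm]
        have h2 : eV (K.erase m) ∈ SpanRows m k' := by
          apply IH k' (K.erase m) (erase_subset_range hK)
          rw [card_erase_of_mem hm, hc]
          omega
        have hle : Submodule.map (liftT m) (SpanRows m k') ≤ SpanRows (m + 1) (k' + 1) := by
          rw [SpanRows, Submodule.map_span]
          apply Submodule.span_le.2
          rintro f ⟨g, ⟨J, hJ, hFR, rfl⟩, rfl⟩
          exact stepA k' J hJ hFR
        rw [h1]
        exact hle (Submodule.mem_map_of_mem h2)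
      · have hKm : K ⊆ range m := (subset_range_succ_iff hm).1 hK
        have h2 : eV K ∈ SpanRows m (k' + 1) := IH (k' + 1) K hKm hc
        have hle : SpanRows m (k' + 1) ≤ SpanRows (m + 1) (k' + 1) := by
          apply Submodule.span_le.2
          rintro f ⟨J, hJ, hFR, rfl⟩
          have hsplit : rowN m (k' + 1) J
              = rowN (m + 1) (k' + 1) J - liftT m (rowN m k' J) := by
            rw [row_split hJ]
            abel
          rw [hsplit]
          refine Submodule.sub_mem _ ?_ (stepA k' J hJ hFR)
          exact rowN_mem (hJ.trans (range_subset_range.2 (Nat.le_succ m))) hFR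
        exact hle h2

/-! ### Counting the full-rank sets. -/

def Nset (m k : ℕ) : Finset (Finset ℕ) :=
  (range m).powerset.filter (fun J => FR J ∧ J.card ≤ k)

lemma mem_Nset {m k : ℕ} {J : Finset ℕ} :
    J ∈ Nset m k ↔ J ⊆ range m ∧ FR J ∧ J.card ≤ k := by
  simp [Nset, mem_filter, mem_powerset, and_assoc]

lemma Nset_zero (m : ℕ) : Nset m 0 = {∅} := by
  ext J
  rw [mem_Nset, mem_singleton]
  constructor
  · rintro ⟨-, -, hcard⟩
    exact card_eq_zero.1 (Nat.le_zero.1 hcard)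
  · rintro rfl
    exact ⟨empty_subset _, FR_empty, by simp⟩

lemma choose_rec (m k : ℕ) (hm : 1 ≤ m) :
    (m + 1).choose (min (k + 1) ((m + 1) / 2))
      = m.choose (min (k + 1) (m / 2)) + m.choose (min k ((m - 1) / 2)) := by
  rcases le_or_gt (2 * (k + 1)) m with h | h
  · have e1 : min (k + 1) ((m + 1) / 2) = k + 1 := by omega
    have e2 : min (k + 1) (m / 2) = k + 1 := by omega
    have e3 : min k ((m - 1) / 2) = k := by omega
    rw [e1, e2, e3, Nat.choose_succ_succ, Nat.add_comm]
  · rcases Nat.even_or_odd m with ⟨t, ht⟩ | ⟨t, ht⟩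
    · have ht1 : 1 ≤ t := by omega
      have e1 : min (k + 1) ((m + 1) / 2) = t := by omega
      have e2 : min (k + 1) (m / 2) = t := by omega
      have e3 : min k ((m - 1) / 2) = t - 1 := by omega
      rw [e1, e2, e3, ht]
      obtain ⟨t', rfl⟩ : ∃ t', t = t' + 1 := ⟨t - 1, by omega⟩
      have h1 : (t' + 1 + (t' + 1) + 1).choose (t' + 1)
          = (t' + 1 + (t' + 1)).choose t' + (t' + 1 + (t' + 1)).choose (t' + 1) :=
        Nat.choose_succ_succ _ t'
      have e4 : t' + 1 - 1 = t' := by omega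
      rw [e4, h1, Nat.add_comm]
    · have e1 : min (k + 1) ((m + 1) / 2) = t + 1 := by omega
      have e2 : min (k + 1) (m / 2) = t := by omega
      have e3 : min k ((m - 1) / 2) = t := by omega
      rw [e1, e2, e3, ht]
      have h1 : (2 * t + 1 + 1).choose (t + 1)
          = (2 * t + 1).choose t + (2 * t + 1).choose (t + 1) :=
        Nat.choose_succ_succ _ t
      have h2 : (2 * t + 1).choose (t + 1) = (2 * t + 1).choose t := by
        have h3 := Nat.choose_symm (show t ≤ 2 * t + 1 by omega)
        have e4 : 2 * t + 1 - t = t + 1 := by omega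
        rw [e4] at h3
        exact h3
      rw [h1, h2]

lemma Nset_card : ∀ m k, (Nset m k).card = m.choose (min k (m / 2)) := by
  intro m
  induction m with
  | zero =>
    intro k
    have h : Nset 0 k = {∅} := by
      ext J
      rw [mem_Nset, mem_singleton]
      constructor
      · rintro ⟨hsub, -, -⟩
        exact subset_empty.1 (by simpa using hsub)
      · rintro rfl
        exact ⟨empty_subset _, FR_empty, by simp⟩
    rw [h, card_singleton]
    simp
  | succ m IH =>
    intro k
    cases k with
    | zero =>
      rw [Nset_zero, card_singleton]
      simp
    | succ k =>
      rcases Nat.eq_zero_or_pos m with rfl | hm1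
      · have h : Nset 1 (k + 1) = {∅} := by
          ext J
          rw [mem_Nset, mem_singleton]
          constructor
          · rintro ⟨hsub, hFR, -⟩
            by_contra hne
            obtain ⟨x, hx⟩ := nonempty_iff_ne_empty.2 hne
            have hx0 : x = 0 := by
              have := mem_range.1 (hsub hx)
              omega
            subst hx0
            have hmem : (0 : ℕ) ∈ J.filter (· < 1) := mem_filter.2 ⟨hx, by norm_num⟩
            have hpos := card_pos.2 ⟨0, hmem⟩
            have := hFR 1
            omega
          · rintro rfl
            exact ⟨empty_subset _, FR_empty, by simp⟩
        rw [h, card_singleton]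
        simp
      · have hdec : Nset (m + 1) (k + 1)
            = (Nset m (k + 1)) ∪ (Nset m (min k ((m - 1) / 2))).image (insert m) := by
          ext J
          rw [mem_Nset, mem_union, mem_Nset, mem_image]
          constructor
          · rintro ⟨hsub, hFR, hcard⟩
            by_cases hm : m ∈ J
            · right
              refine ⟨J.erase m, ?_, insert_erase hm⟩
              rw [mem_Nset]
              have hsub' : J.erase m ⊆ range m := erase_subset_range hsub
              have hFR' : FR (J.erase m) := hFR.subset (erase_subset _ _)
              have hce : (J.erase m).card = J.card - 1 := card_erase_of_mem hm
              have hcardpos : 1 ≤ J.card := card_pos.2 ⟨m, hm⟩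
              have h3 : 2 * J.card ≤ m + 1 := hFR.twice_card_le hsub
              exact ⟨hsub', hFR', by omega⟩
            · left
              exact ⟨(subset_range_succ_iff hm).1 hsub, hFR, hcard⟩
          · rintro (⟨hsub, hFR, hcard⟩ | ⟨J', hJ', rfl⟩)
            · exact ⟨hsub.trans (range_subset_range.2 (Nat.le_succ m)), hFR, hcard⟩
            · rw [mem_Nset] at hJ'
              obtain ⟨hsub', hFR', hcard'⟩ := hJ'
              have hm' : m ∉ J' := notmem_of_subset_range hsub'
              have h1 : 2 * (J'.card + 1) ≤ m + 1 := by omega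
              refine ⟨?_, FR_insert hFR' hm' h1, ?_⟩
              · intro x hx
                rcases mem_insert.1 hx with rfl | hx'
                · exact mem_range.2 (by omega)
                · have := mem_range.1 (hsub' hx')
                  exact mem_range.2 (by omega)
              · rw [card_insert_of_notMem hm']
                omega
        have hdisj : Disjoint (Nset m (k + 1))
            ((Nset m (min k ((m - 1) / 2))).image (insert m)) := by
          rw [Finset.disjoint_left]
          intro J hJ hJ'
          obtain ⟨J', hJ'', rfl⟩ := mem_image.1 hJ'
          exact notmem_of_subset_range (mem_Nset.1 hJ).1 (mem_insert_self m J')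
        have hinj : Set.InjOn (insert m) ((Nset m (min k ((m - 1) / 2)) : Finset (Finset ℕ)) : Set (Finset ℕ)) := by
          intro J1 h1 J2 h2 heq
          have hm1' : m ∉ J1 := notmem_of_subset_range (mem_Nset.1 (Finset.mem_coe.1 h1)).1
          have hm2' : m ∉ J2 := notmem_of_subset_range (mem_Nset.1 (Finset.mem_coe.1 h2)).1
          rw [← erase_insert hm1', heq, erase_insert hm2']
        rw [hdec, card_union_of_disjoint hdisj, card_image_of_injOn hinj, IH, IH]
        have hmm : min (min k ((m - 1) / 2)) (m / 2) = min k ((m - 1) / 2) := by omega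
        rw [hmm]
        exact (choose_rec m k hm1).symm

/-! ### Bridge between `IsFullRank` over `Fin n` and `FR` over `ℕ`. -/

lemma sorted_getD_lt_of_countP {L : List ℕ} (hL : L.Pairwise (· < ·)) {v : ℕ}
    (hc : 0 < L.countP (fun x => decide (x < v))) :
    L.getD (L.countP (fun x => decide (x < v)) - 1) 0 < v := by
  induction L with
  | nil => simp at hc
  | cons a T ih =>
    by_cases ha : a < v
    · have hcc : (a :: T).countP (fun x => decide (x < v))
          = T.countP (fun x => decide (x < v)) + 1 := by
        rw [List.countP_cons]
        simp [ha]
      rcases Nat.eq_zero_or_pos (T.countP (fun x => decide (x < v))) with h0 | hpos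
      · rw [hcc, h0]
        simpa using ha
      · have hT := ih hL.of_cons hpos
        obtain ⟨c, hc'⟩ := Nat.exists_eq_succ_of_ne_zero (Nat.pos_iff_ne_zero.1 hpos)
        rw [hcc, hc']
        rw [hc'] at hT
        simpa [List.getD_cons_succ] using hT
    · exfalso
      have hT : T.countP (fun x => decide (x < v)) = 0 := by
        apply List.countP_eq_zero.2
        intro x hx
        have hax : a < x := (List.pairwise_cons.1 hL).1 x hx
        simp only [decide_eq_true_eq]
        omega
      rw [List.countP_cons] at hc
      simp [hT, ha] at hc

lemma sorted_countP_ge {L : List ℕ} (hL : L.Pairwise (· < ·)) :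
    ∀ j, j < L.length → j + 1 ≤ L.countP (fun x => decide (x < L.getD j 0 + 1)) := by
  induction L with
  | nil => intro j hj; simp at hj
  | cons a T ih =>
    intro j hj
    cases j with
    | zero =>
      rw [List.countP_cons]
      simp
    | succ j =>
      have hjT : j < T.length := by simpa using hj
      have hmem : T.getD j 0 ∈ T := by
        rw [List.getD_eq_getElem _ _ hjT]
        exact List.getElem_mem _
      have haT : a < T.getD j 0 := (List.pairwise_cons.1 hL).1 _ hmem
      have hih := ih hL.of_cons j hjT
      rw [List.getD_cons_succ, List.countP_cons]
      have hd : decide (a < T.getD j 0 + 1) = true := by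
        simp only [decide_eq_true_eq]
        omega
      rw [hd]
      simp only [if_true]
      omega

lemma countP_sort_eq_card_filter {n : ℕ} (s : Finset (Fin n)) (v : ℕ) :
    ((s.sort (· ≤ ·)).map Fin.val).countP (fun x => decide (x < v))
      = (s.filter (fun i : Fin n => (i : ℕ) < v)).card := by
  rw [List.countP_map]
  rw [(Finset.sort_perm_toList s (· ≤ ·)).countP_eq]
  have h2 := Multiset.coe_countP (p := fun i : Fin n => (i : ℕ) < v) s.toList
  rw [Finset.coe_toList] at h2
  rw [show ((fun x => decide (x < v)) ∘ Fin.val) = (fun b : Fin n => decide ((b : ℕ) < v))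
    from rfl]
  rw [← h2, Multiset.countP_eq_card_filter, Finset.card_def, Finset.filter_val]

lemma sortedVals_eq {n : ℕ} (s : Finset (Fin n)) :
    sortedVals s = ((s.sort (· ≤ ·)).map Fin.val).map (fun x => x + 1) := by
  rw [sortedVals]
  congr 1
  induction (s.sort (· ≤ ·)) with
  | nil => rfl
  | cons a t ih => simpa using ih

lemma sortedVals_getD {n : ℕ} (s : Finset (Fin n)) {j : ℕ} (hj : j < s.card) :
    (sortedVals s).getD j 0 = ((s.sort (· ≤ ·)).map Fin.val).getD j 0 + 1 := by
  have h3 : j < ((s.sort (· ≤ ·)).map Fin.val).length := by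
    rw [List.length_map, Finset.length_sort]
    exact hj
  have h2 : j < (((s.sort (· ≤ ·)).map Fin.val).map (fun x => x + 1)).length := by
    rw [List.length_map]
    exact h3
  rw [sortedVals_eq, List.getD_eq_getElem _ _ h2, List.getD_eq_getElem _ _ h3,
    List.getElem_map]

lemma isFullRank_iff_FR {n : ℕ} (s : Finset (Fin n)) :
    IsFullRank s ↔ FR (s.map Fin.valEmbedding) := by
  have hsorted : ((s.sort (· ≤ ·)).map Fin.val).Pairwise (· < ·) :=
    List.Pairwise.map _ (fun a b h => h) (Finset.sortedLT_sort s).pairwise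
  have hlen : ((s.sort (· ≤ ·)).map Fin.val).length = s.card := by
    rw [List.length_map, Finset.length_sort]
  have hfil : ∀ v, ((s.map Fin.valEmbedding).filter (· < v)).card
      = (s.filter (fun i : Fin n => (i : ℕ) < v)).card := by
    intro v
    have hset : (s.map Fin.valEmbedding).filter (· < v)
        = (s.filter (fun i : Fin n => (i : ℕ) < v)).map Fin.valEmbedding := by
      ext a
      simp only [mem_filter, mem_map, Fin.valEmbedding_apply]
      constructor
      · rintro ⟨⟨i, hi, rfl⟩, hlt⟩
        exact ⟨i, ⟨hi, hlt⟩, rfl⟩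
      · rintro ⟨i, ⟨hi1, hi2⟩, rfl⟩
        exact ⟨⟨i, hi1, rfl⟩, hi2⟩
    rw [hset, card_map]
  constructor
  · intro h v
    rw [hfil, ← countP_sort_eq_card_filter]
    set c := ((s.sort (· ≤ ·)).map Fin.val).countP (fun x => decide (x < v)) with hcdef
    rcases Nat.eq_zero_or_pos c with h0 | hpos
    · omega
    · have hlt := sorted_getD_lt_of_countP hsorted hpos
      rw [← hcdef] at hlt
      have hclen : c ≤ s.card := by
        rw [← hlen]
        exact List.countP_le_length
      have hcond := h (c - 1) (by omega)
      rw [sortedVals_getD s (by omega)] at hcond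
      omega
  · intro h j hj
    have h1 := sorted_countP_ge hsorted j (by rwa [hlen])
    have h2 := h (((s.sort (· ≤ ·)).map Fin.val).getD j 0 + 1)
    rw [hfil, ← countP_sort_eq_card_filter] at h2
    rw [sortedVals_getD s hj]
    omega

/-! ### Transfer to the `Fin n` setting. -/

variable (n k : ℕ)

def Phi : (Finset ℕ → ℤ) →ₗ[ℤ] ({K : Finset (Fin n) // K.card = k} → ℤ) where
  toFun f := fun K => f (K.1.map Fin.valEmbedding)
  map_add' f g := rfl
  map_smul' c f := rfl

def rowF (J : {J : Finset (Fin n) // J.card ≤ k ∧ IsFullRank J}) :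
    {K : Finset (Fin n) // K.card = k} → ℤ := fun K => bierMatrix n k J K

lemma map_val_subset_range (s : Finset (Fin n)) : s.map Fin.valEmbedding ⊆ range n := by
  intro x hx
  obtain ⟨i, _, rfl⟩ := mem_map.1 hx
  exact mem_range.2 i.2

lemma finset_of_nat_map {S : Finset ℕ} (hS : S ⊆ range n) :
    (univ.filter (fun i : Fin n => (i : ℕ) ∈ S)).map Fin.valEmbedding = S := by
  ext a
  simp only [mem_map, mem_filter, mem_univ, true_and, Fin.valEmbedding_apply]
  constructor
  · rintro ⟨i, hi, rfl⟩
    exact hi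
  · intro ha
    exact ⟨⟨a, mem_range.1 (hS ha)⟩, ha, rfl⟩

lemma spanF (g : {K : Finset (Fin n) // K.card = k} → ℤ) :
    g ∈ Submodule.span ℤ (Set.range (rowF n k)) := by
  have hle : Submodule.map (Phi n k) (SpanRows n k)
      ≤ Submodule.span ℤ (Set.range (rowF n k)) := by
    rw [SpanRows, Submodule.map_span]
    apply Submodule.span_le.2
    rintro f ⟨gg, ⟨J, hJ, hFR, rfl⟩, rfl⟩
    by_cases hcard : J.card ≤ k
    · set JF : Finset (Fin n) := univ.filter (fun i => (i : ℕ) ∈ J) with hJFdef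
      have hmap : JF.map Fin.valEmbedding = J := finset_of_nat_map n hJ
      have hFRF : IsFullRank JF := (isFullRank_iff_FR JF).2 (by rw [hmap]; exact hFR)
      have hcF : JF.card ≤ k := by
        have := congrArg Finset.card hmap
        rw [card_map] at this
        omega
      have heq : Phi n k (rowN n k J) = rowF n k ⟨JF, hcF, hFRF⟩ := by
        funext K
        show (if (K.1.map Fin.valEmbedding ⊆ range n ∧ (K.1.map Fin.valEmbedding).card = k
            ∧ J ⊆ K.1.map Fin.valEmbedding) then (1 : ℤ) else 0)
          = (if JF ⊆ K.1 then (1 : ℤ) else 0)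
        have hKr : K.1.map Fin.valEmbedding ⊆ range n := map_val_subset_range n K.1
        have hKc : (K.1.map Fin.valEmbedding).card = k := by
          rw [card_map]
          exact K.2
        by_cases hsub : JF ⊆ K.1
        · rw [if_pos ⟨hKr, hKc, by rw [← hmap]; exact map_subset_map.2 hsub⟩, if_pos hsub]
        · rw [if_neg, if_neg hsub]
          rintro ⟨-, -, h3⟩
          apply hsub
          apply map_subset_map.1
          rw [hmap]
          exact h3
      rw [heq]
      exact Submodule.subset_span ⟨_, rfl⟩
    · have hz : rowN n k J = 0 := rowN_zero (by omega)
      rw [hz, LinearMap.map_zero]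
      exact Submodule.zero_mem _
  have htop : ∀ K : {K : Finset (Fin n) // K.card = k},
      (fun K' => if K = K' then (1 : ℤ) else 0)
        ∈ Submodule.span ℤ (Set.range (rowF n k)) := by
    intro K
    have hKt : (K.1.map Fin.valEmbedding) ⊆ range n := map_val_subset_range n K.1
    have hmem := span_eN n k (K.1.map Fin.valEmbedding) hKt (by rw [card_map]; exact K.2)
    have heq : (fun K' => if K = K' then (1 : ℤ) else 0)
        = Phi n k (eV (K.1.map Fin.valEmbedding)) := by
      funext K'
      show _ = (if K'.1.map Fin.valEmbedding = K.1.map Fin.valEmbedding then (1 : ℤ) else 0)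
      by_cases h : K = K'
      · rw [if_pos h, if_pos (by rw [h])]
      · rw [if_neg h, if_neg]
        intro hc
        exact h (Subtype.ext (Finset.map_injective _ hc)).symm
    rw [heq]
    exact hle (Submodule.mem_map_of_mem hmem)
  rw [pi_eq_sum_univ g]
  apply Submodule.sum_mem
  intro K _
  exact Submodule.smul_mem _ _ (htop K)

lemma cardR (h2 : 2 * k ≤ n) :
    Fintype.card {J : Finset (Fin n) // J.card ≤ k ∧ IsFullRank J} = n.choose k := by
  rw [Fintype.card_subtype]
  have hb : (univ.filter (fun J : Finset (Fin n) => J.card ≤ k ∧ IsFullRank J)).card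
      = (Nset n k).card := by
    apply Finset.card_bij (fun J _ => J.map Fin.valEmbedding)
    · intro J hJ
      obtain ⟨h1, hfr⟩ := (mem_filter.1 hJ).2
      rw [mem_Nset]
      exact ⟨map_val_subset_range n J, (isFullRank_iff_FR J).1 hfr, by rwa [card_map]⟩
    · intro J1 _ J2 _ heq
      exact Finset.map_injective _ heq
    · intro S hS
      rw [mem_Nset] at hS
      obtain ⟨hSsub, hFR, hcard⟩ := hS
      refine ⟨univ.filter (fun i : Fin n => (i : ℕ) ∈ S), ?_, finset_of_nat_map n hSsub⟩
      rw [mem_filter]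
      refine ⟨mem_univ _, ?_, ?_⟩
      · have := congrArg Finset.card (finset_of_nat_map n hSsub)
        rw [card_map] at this
        omega
      · exact (isFullRank_iff_FR _).2 (by rw [finset_of_nat_map n hSsub]; exact hFR)
  rw [hb, Nset_card]
  congr 1
  omega

end

end BierAux

theorem stmt10 (n k : ℕ) (hk : 2 * k ≤ n) :
    ∃ e : {J : Finset (Fin n) // J.card ≤ k ∧ IsFullRank J} ≃ {K : Finset (Fin n) // K.card = k},
      IsUnit ((bierMatrix n k).submatrix id e).det := by
  classical
  have hcards : Fintype.card {J : Finset (Fin n) // J.card ≤ k ∧ IsFullRank J}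
      = Fintype.card {K : Finset (Fin n) // K.card = k} := by
    rw [BierAux.cardR n k hk, Fintype.card_finset_len, Fintype.card_fin]
  refine ⟨Fintype.equivOfCardEq hcards, ?_⟩
  set e := Fintype.equivOfCardEq hcards with he
  set M := (bierMatrix n k).submatrix id e with hM
  have hsurj : Function.Surjective (Matrix.toLin' M.transpose) := by
    intro g
    have hg := BierAux.spanF n k (g ∘ e.symm)
    rw [Submodule.mem_span_range_iff_exists_fun] at hg
    obtain ⟨c, hc⟩ := hg
    refine ⟨c, ?_⟩
    funext J0
    have hval := congrFun hc (e J0)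
    rw [Finset.sum_apply] at hval
    simp only [Function.comp_apply, Equiv.symm_apply_apply] at hval
    simp only [Matrix.toLin'_apply, Matrix.mulVec, dotProduct, Matrix.transpose_apply,
      hM, Matrix.submatrix_apply, id_eq]
    rw [← hval]
    apply Finset.sum_congr rfl
    intro J _
    simp [BierAux.rowF, mul_comm]
  have hinj : Function.Injective (Matrix.toLin' M.transpose) :=
    OrzechProperty.injective_of_surjective_endomorphism _ hsurj
  have hunit : IsUnit (LinearMap.det (Matrix.toLin' M.transpose)) := by
    let E := LinearEquiv.ofBijective (Matrix.toLin' M.transpose) ⟨hinj, hsurj⟩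
    have hEq : (E : _ →ₗ[ℤ] _) = Matrix.toLin' M.transpose := rfl
    have := E.isUnit_det'
    rwa [hEq] at this
  rw [LinearMap.det_toLin', Matrix.det_transpose] at hunit
  exact hunit
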